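/- Under the hypotheses of the previous verification inequality, suppose additionally that equality V^λ_t + (V^λ_x·F + V^λ_ψ − γ)u − |Q|u² − λ = 0 holds at every point when u = μ*(t,x,ψ) := (V^λ_x(t,x,ψ)·F(x,ψ) + V^λ_ψ(t,x,ψ) − γ)/(2|Q(x,ψ)|), and that the trajectory (x(t),ψ(t)) is driven by μ(t) = μ*(t,x(t),ψ(t)). Then V^λ(s,y,φ) = (γ+λ)T + ∫_s^T ( −|Q(x(t),ψ(t))| μ(t)² − λ − γ μ(t) ) dt. -/

import Mathlib

open scoped RealInnerProductSpace

/-- Joint differentiability of `V` from continuous partial derivatives. -/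
lemma aux_total_fderiv {E : Type*} [NormedAddCommGroup E] [InnerProductSpace ℝ E]
    [CompleteSpace E]
    (V Vt : ℝ → E → ℝ → ℝ) (Vx : ℝ → E → ℝ → E) (Vψ : ℝ → E → ℝ → ℝ)
    (hVt : ∀ t x ψ, HasDerivAt (fun s => V s x ψ) (Vt t x ψ) t)
    (hVx : ∀ t x ψ, HasGradientAt (fun y => V t y ψ) (Vx t x ψ) x)
    (hVψ : ∀ t x ψ, HasDerivAt (fun p => V t x p) (Vψ t x ψ) ψ)
    (hVtc : Continuous fun p : ℝ × E × ℝ => Vt p.1 p.2.1 p.2.2)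
    (hVxc : Continuous fun p : ℝ × E × ℝ => Vx p.1 p.2.1 p.2.2)
    (hVψc : Continuous fun p : ℝ × E × ℝ => Vψ p.1 p.2.1 p.2.2)
    (p₀ : ℝ × E × ℝ) :
    HasFDerivAt (fun q : ℝ × E × ℝ => V q.1 q.2.1 q.2.2)
      ((Vt p₀.1 p₀.2.1 p₀.2.2) • (ContinuousLinearMap.fst ℝ ℝ (E × ℝ)) +
        (innerSL ℝ (Vx p₀.1 p₀.2.1 p₀.2.2)).comp
          ((ContinuousLinearMap.fst ℝ E ℝ).comp (ContinuousLinearMap.snd ℝ ℝ (E × ℝ))) +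
        (Vψ p₀.1 p₀.2.1 p₀.2.2) • ((ContinuousLinearMap.snd ℝ E ℝ).comp
          (ContinuousLinearMap.snd ℝ ℝ (E × ℝ)))) p₀ := by
  obtain ⟨t₀, x₀, ψ₀⟩ := p₀
  set a := Vt t₀ x₀ ψ₀ with ha
  set b := Vx t₀ x₀ ψ₀ with hb
  set c := Vψ t₀ x₀ ψ₀ with hc
  rw [hasFDerivAt_iff_isLittleO_nhds_zero, Asymptotics.isLittleO_iff]
  intro ε hε
  have hε3 : (0:ℝ) < ε / 3 := by linarith
  have h1 : ∀ᶠ q : ℝ × E × ℝ in nhds (t₀, x₀, ψ₀),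
      dist (Vt q.1 q.2.1 q.2.2) a < ε / 3 :=
    (Metric.tendsto_nhds.1 hVtc.continuousAt) (ε/3) hε3
  have h2 : ∀ᶠ q : ℝ × E × ℝ in nhds (t₀, x₀, ψ₀),
      dist (Vx q.1 q.2.1 q.2.2) b < ε / 3 :=
    (Metric.tendsto_nhds.1 hVxc.continuousAt) (ε/3) hε3
  have h3 : ∀ᶠ q : ℝ × E × ℝ in nhds (t₀, x₀, ψ₀),
      dist (Vψ q.1 q.2.1 q.2.2) c < ε / 3 :=
    (Metric.tendsto_nhds.1 hVψc.continuousAt) (ε/3) hε3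
  obtain ⟨r, hr, hU⟩ := Metric.eventually_nhds_iff_ball.1 ((h1.and h2).and h3)
  have memball : ∀ c' ∈ Metric.ball t₀ r, ∀ z' ∈ Metric.ball x₀ r,
      ∀ w' ∈ Metric.ball ψ₀ r, ((c', z', w') : ℝ × E × ℝ) ∈ Metric.ball (t₀, x₀, ψ₀) r := by
    intro c' hc' z' hz' w' hw'
    rw [Metric.mem_ball, Prod.dist_eq, Prod.dist_eq]
    exact max_lt hc' (max_lt hz' hw')
  filter_upwards [Metric.ball_mem_nhds (0 : ℝ × E × ℝ) hr] with Δ hΔ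
  obtain ⟨dt, dz, dw⟩ := Δ
  rw [Metric.mem_ball, dist_zero_right, Prod.norm_def, max_lt_iff, Prod.norm_def,
    max_lt_iff] at hΔ
  obtain ⟨d1, d2, d3⟩ := hΔ
  set t : ℝ := t₀ + dt with htdef
  set z : E := x₀ + dz with hzdef
  set w : ℝ := ψ₀ + dw with hwdef
  have et : t - t₀ = dt := by rw [htdef]; ring
  have ez : z - x₀ = dz := by rw [hzdef]; abel
  have ew : w - ψ₀ = dw := by rw [hwdef]; ring
  have htb : t ∈ Metric.ball t₀ r := by
    rw [Metric.mem_ball, dist_eq_norm, et]; exact d1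
  have hzb : z ∈ Metric.ball x₀ r := by
    rw [Metric.mem_ball, dist_eq_norm, ez]; exact d2
  have hwb : w ∈ Metric.ball ψ₀ r := by
    rw [Metric.mem_ball, dist_eq_norm, ew]; exact d3
  -- Bracket 1 : variation in t
  have B1 : ‖V t z w - V t₀ z w - a * dt‖ ≤ ε / 3 * ‖dt‖ := by
    have hd : ∀ c' ∈ Metric.ball t₀ r,
        HasDerivWithinAt (fun c' => V c' z w - a * c') (Vt c' z w - a) (Metric.ball t₀ r) c' := by
      intro c' _
      have := (hVt c' z w).sub (((hasDerivAt_id c').const_mul a))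
      simpa [Pi.sub_def] using this.hasDerivWithinAt
    have hbd : ∀ c' ∈ Metric.ball t₀ r, ‖Vt c' z w - a‖ ≤ ε / 3 := by
      intro c' hc'
      have := (hU _ (memball c' hc' z hzb w hwb)).1.1
      rw [dist_eq_norm] at this
      exact this.le
    have key := Convex.norm_image_sub_le_of_norm_hasDerivWithin_le hd hbd
      (convex_ball t₀ r) (Metric.mem_ball_self hr) htb
    have e : (V t z w - a * t) - (V t₀ z w - a * t₀)
        = V t z w - V t₀ z w - a * dt := by rw [← et]; ring
    rwa [e, et] at key
  -- Bracket 2 : variation in x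
  have toDual_eq : ∀ v : E, (InnerProductSpace.toDual ℝ E v : E →L[ℝ] ℝ) = innerSL ℝ v := by
    intro v; ext y; simp [InnerProductSpace.toDual_apply_apply]
  have B2 : ‖V t₀ z w - V t₀ x₀ w - ⟪b, dz⟫‖ ≤ ε / 3 * ‖dz‖ := by
    have hd : ∀ z' ∈ Metric.ball x₀ r,
        HasFDerivWithinAt (fun z' => V t₀ z' w - ⟪b, z'⟫)
          (innerSL ℝ (Vx t₀ z' w - b)) (Metric.ball x₀ r) z' := by
      intro z' _
      have h := (hVx t₀ z' w).hasFDerivAt.sub (innerSL ℝ b).hasFDerivAt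
      rw [toDual_eq, ← map_sub] at h
      exact h.hasFDerivWithinAt
    have hbd : ∀ z' ∈ Metric.ball x₀ r, ‖innerSL ℝ (Vx t₀ z' w - b)‖ ≤ ε / 3 := by
      intro z' hz'
      rw [innerSL_apply_norm]
      have := (hU _ (memball t₀ (Metric.mem_ball_self hr) z' hz' w hwb)).1.2
      rw [dist_eq_norm] at this
      exact this.le
    have key := Convex.norm_image_sub_le_of_norm_hasFDerivWithin_le hd hbd
      (convex_ball x₀ r) (Metric.mem_ball_self hr) hzb
    have e : (V t₀ z w - ⟪b, z⟫) - (V t₀ x₀ w - ⟪b, x₀⟫)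
        = V t₀ z w - V t₀ x₀ w - ⟪b, dz⟫ := by
      rw [← ez, inner_sub_right]; ring
    rwa [e, ez] at key
  -- Bracket 3 : variation in ψ
  have B3 : ‖V t₀ x₀ w - V t₀ x₀ ψ₀ - c * dw‖ ≤ ε / 3 * ‖dw‖ := by
    have hd : ∀ w' ∈ Metric.ball ψ₀ r,
        HasDerivWithinAt (fun w' => V t₀ x₀ w' - c * w') (Vψ t₀ x₀ w' - c)
          (Metric.ball ψ₀ r) w' := by
      intro w' _
      have := (hVψ t₀ x₀ w').sub (((hasDerivAt_id w').const_mul c))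
      simpa [Pi.sub_def] using this.hasDerivWithinAt
    have hbd : ∀ w' ∈ Metric.ball ψ₀ r, ‖Vψ t₀ x₀ w' - c‖ ≤ ε / 3 := by
      intro w' hw'
      have := (hU _ (memball t₀ (Metric.mem_ball_self hr) x₀ (Metric.mem_ball_self hr) w' hw')).2
      rw [dist_eq_norm] at this
      exact this.le
    have key := Convex.norm_image_sub_le_of_norm_hasDerivWithin_le hd hbd
      (convex_ball ψ₀ r) (Metric.mem_ball_self hr) hwb
    have e : (V t₀ x₀ w - c * w) - (V t₀ x₀ ψ₀ - c * ψ₀)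
        = V t₀ x₀ w - V t₀ x₀ ψ₀ - c * dw := by rw [← ew]; ring
    rwa [e, ew] at key
  -- combine
  have Lval : ((a • (ContinuousLinearMap.fst ℝ ℝ (E × ℝ)) +
        (innerSL ℝ b).comp
          ((ContinuousLinearMap.fst ℝ E ℝ).comp (ContinuousLinearMap.snd ℝ ℝ (E × ℝ))) +
        c • ((ContinuousLinearMap.snd ℝ E ℝ).comp (ContinuousLinearMap.snd ℝ ℝ (E × ℝ))))
        ((dt, dz, dw) : ℝ × E × ℝ))
      = a * dt + ⟪b, dz⟫ + c * dw := by
    simp [ContinuousLinearMap.add_apply, ContinuousLinearMap.smul_apply,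
      ContinuousLinearMap.comp_apply, smul_eq_mul]
  rw [Lval]
  have decomp : V (t₀ + dt) (x₀ + dz) (ψ₀ + dw) - V t₀ x₀ ψ₀
        - (a * dt + ⟪b, dz⟫ + c * dw)
      = (V t z w - V t₀ z w - a * dt) + (V t₀ z w - V t₀ x₀ w - ⟪b, dz⟫)
        + (V t₀ x₀ w - V t₀ x₀ ψ₀ - c * dw) := by
    rw [← htdef, ← hzdef, ← hwdef]; ring
  simp only [Prod.fst_add, Prod.snd_add] at *
  rw [decomp]
  have n1 : ‖dt‖ ≤ ‖((dt, dz, dw) : ℝ × E × ℝ)‖ := by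
    simpa using norm_fst_le ((dt, dz, dw) : ℝ × E × ℝ)
  have n2 : ‖dz‖ ≤ ‖((dt, dz, dw) : ℝ × E × ℝ)‖ := by
    have h1 : ‖dz‖ ≤ ‖((dz, dw) : E × ℝ)‖ := by
      simpa using norm_fst_le ((dz, dw) : E × ℝ)
    have h2 : ‖((dz, dw) : E × ℝ)‖ ≤ ‖((dt, dz, dw) : ℝ × E × ℝ)‖ := by
      simpa using norm_snd_le ((dt, dz, dw) : ℝ × E × ℝ)
    exact h1.trans h2
  have n3 : ‖dw‖ ≤ ‖((dt, dz, dw) : ℝ × E × ℝ)‖ := by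
    have h1 : ‖dw‖ ≤ ‖((dz, dw) : E × ℝ)‖ := by
      simpa using norm_snd_le ((dz, dw) : E × ℝ)
    have h2 : ‖((dz, dw) : E × ℝ)‖ ≤ ‖((dt, dz, dw) : ℝ × E × ℝ)‖ := by
      simpa using norm_snd_le ((dt, dz, dw) : ℝ × E × ℝ)
    exact h1.trans h2
  have tot := norm_add₃_le.trans (add_le_add (add_le_add B1 B2) B3)
  have : ε / 3 * ‖dt‖ + ε / 3 * ‖dz‖ + ε / 3 * ‖dw‖ ≤ ε * ‖((dt, dz, dw) : ℝ × E × ℝ)‖ := by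
    have i1 : ε / 3 * ‖dt‖ ≤ ε / 3 * ‖((dt, dz, dw) : ℝ × E × ℝ)‖ := by gcongr
    have i2 : ε / 3 * ‖dz‖ ≤ ε / 3 * ‖((dt, dz, dw) : ℝ × E × ℝ)‖ := by gcongr
    have i3 : ε / 3 * ‖dw‖ ≤ ε / 3 * ‖((dt, dz, dw) : ℝ × E × ℝ)‖ := by gcongr
    linarith
  exact tot.trans this

/-- Chain rule along the trajectory. -/
lemma aux_hasDerivAt_comp {E : Type*} [NormedAddCommGroup E] [InnerProductSpace ℝ E]
    [CompleteSpace E]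
    (V Vt : ℝ → E → ℝ → ℝ) (Vx : ℝ → E → ℝ → E) (Vψ : ℝ → E → ℝ → ℝ)
    (hVt : ∀ t x ψ, HasDerivAt (fun s => V s x ψ) (Vt t x ψ) t)
    (hVx : ∀ t x ψ, HasGradientAt (fun y => V t y ψ) (Vx t x ψ) x)
    (hVψ : ∀ t x ψ, HasDerivAt (fun p => V t x p) (Vψ t x ψ) ψ)
    (hVtc : Continuous fun p : ℝ × E × ℝ => Vt p.1 p.2.1 p.2.2)
    (hVxc : Continuous fun p : ℝ × E × ℝ => Vx p.1 p.2.1 p.2.2)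
    (hVψc : Continuous fun p : ℝ × E × ℝ => Vψ p.1 p.2.1 p.2.2)
    (x : ℝ → E) (ψ : ℝ → ℝ) (t : ℝ) (x' : E) (ψ' : ℝ)
    (hx : HasDerivAt x x' t) (hψ : HasDerivAt ψ ψ' t) :
    HasDerivAt (fun u => V u (x u) (ψ u))
      (Vt t (x t) (ψ t) + ⟪Vx t (x t) (ψ t), x'⟫ + Vψ t (x t) (ψ t) * ψ') t := by
  have hW := aux_total_fderiv V Vt Vx Vψ hVt hVx hVψ hVtc hVxc hVψc (t, x t, ψ t)
  have hcurve : HasDerivAt (fun u => ((u, x u, ψ u) : ℝ × E × ℝ)) (1, x', ψ') t :=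
    (hasDerivAt_id t).prodMk (hx.prodMk hψ)
  have h := hW.comp_hasDerivAt t hcurve
  simpa [ContinuousLinearMap.add_apply, ContinuousLinearMap.smul_apply,
    ContinuousLinearMap.comp_apply, smul_eq_mul, mul_comm, Function.comp_def] using h

/-- Step 3 of the proof of Theorem 3.2: under the verification hypotheses, if the HJB
equality is attained at the feedback maximizer `μ* = (V_x·F + V_ψ − γ)/(2|Q|)` and the
trajectory is driven by `μ(t) = μ*(t,x(t),ψ(t))`, then
`V^λ(s,y,φ) = (γ+λ)T + ∫_s^T (−|Q|μ² − λ − γμ) dt`. -/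
theorem verification_equality {d : ℕ} (T γ lam : ℝ) (hT : 0 < T) (hlam : 0 ≤ lam)
    (F Q : EuclideanSpace ℝ (Fin d) → ℝ → EuclideanSpace ℝ (Fin d))
    (hF : Continuous fun p : EuclideanSpace ℝ (Fin d) × ℝ => F p.1 p.2)
    (hQ : Continuous fun p : EuclideanSpace ℝ (Fin d) × ℝ => Q p.1 p.2)
    (V : ℝ → EuclideanSpace ℝ (Fin d) → ℝ → ℝ)
    (Vt : ℝ → EuclideanSpace ℝ (Fin d) → ℝ → ℝ)
    (Vx : ℝ → EuclideanSpace ℝ (Fin d) → ℝ → EuclideanSpace ℝ (Fin d))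
    (Vψ : ℝ → EuclideanSpace ℝ (Fin d) → ℝ → ℝ)
    (hVt : ∀ t x ψ, HasDerivAt (fun s => V s x ψ) (Vt t x ψ) t)
    (hVx : ∀ t x ψ, HasGradientAt (fun y => V t y ψ) (Vx t x ψ) x)
    (hVψ : ∀ t x ψ, HasDerivAt (fun p => V t x p) (Vψ t x ψ) ψ)
    (hVtc : Continuous fun p : ℝ × EuclideanSpace ℝ (Fin d) × ℝ => Vt p.1 p.2.1 p.2.2)
    (hVxc : Continuous fun p : ℝ × EuclideanSpace ℝ (Fin d) × ℝ => Vx p.1 p.2.1 p.2.2)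
    (hVψc : Continuous fun p : ℝ × EuclideanSpace ℝ (Fin d) × ℝ => Vψ p.1 p.2.1 p.2.2)
    -- supersolution property of the exploratory HJB
    (hsuper : ∀ (t : ℝ) (x : EuclideanSpace ℝ (Fin d)) (ψ : ℝ) (u : ℝ),
      Vt t x ψ + (⟪Vx t x ψ, F x ψ⟫ + Vψ t x ψ - γ) * u - ‖Q x ψ‖ * u ^ 2 - lam ≤ 0)
    -- terminal condition
    (hterm : ∀ x ψ, V T x ψ = (γ + lam) * T)
    -- admissible trajectory driven by a continuous control μ
    (s : ℝ) (hs : s ∈ Set.Icc (0 : ℝ) T)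
    (μ : ℝ → ℝ) (hμ : ContinuousOn μ (Set.Icc s T))
    (x : ℝ → EuclideanSpace ℝ (Fin d)) (ψ : ℝ → ℝ)
    (hx : ∀ t ∈ Set.Icc s T, HasDerivAt x (μ t • F (x t) (ψ t)) t)
    (hψ : ∀ t ∈ Set.Icc s T, HasDerivAt ψ (μ t) t)
    (y : EuclideanSpace ℝ (Fin d)) (φ : ℝ) (hxy : x s = y) (hψφ : ψ s = φ)
    (hQpos : ∀ x' ψ', 0 < ‖Q x' ψ'‖)
    -- the HJB equality holds at the Hamiltonian maximizer
    (heq : ∀ (t : ℝ) (x' : EuclideanSpace ℝ (Fin d)) (ψ' : ℝ),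
      Vt t x' ψ' +
        (⟪Vx t x' ψ', F x' ψ'⟫ + Vψ t x' ψ' - γ) *
          ((⟪Vx t x' ψ', F x' ψ'⟫ + Vψ t x' ψ' - γ) / (2 * ‖Q x' ψ'‖)) -
        ‖Q x' ψ'‖ * ((⟪Vx t x' ψ', F x' ψ'⟫ + Vψ t x' ψ' - γ) / (2 * ‖Q x' ψ'‖)) ^ 2 -
        lam = 0)
    -- the trajectory is driven by the feedback maximizer μ*
    (hfeedback : ∀ t ∈ Set.Icc s T,
      μ t = (⟪Vx t (x t) (ψ t), F (x t) (ψ t)⟫ + Vψ t (x t) (ψ t) - γ) /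
        (2 * ‖Q (x t) (ψ t)‖)) :
    V s y φ = (γ + lam) * T +
      ∫ t in s..T, (-‖Q (x t) (ψ t)‖ * (μ t) ^ 2 - lam - γ * μ t) := by
  have hsT : s ≤ T := hs.2
  -- continuity of the trajectory
  have hxc : ContinuousOn x (Set.Icc s T) := fun t ht =>
    ((hx t ht).continuousAt).continuousWithinAt
  have hψc : ContinuousOn ψ (Set.Icc s T) := fun t ht =>
    ((hψ t ht).continuousAt).continuousWithinAt
  have hQc : ContinuousOn (fun t => ‖Q (x t) (ψ t)‖) (Set.Icc s T) :=
    (hQ.comp_continuousOn (hxc.prodMk hψc)).norm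
  have hfc : ContinuousOn (fun t => -‖Q (x t) (ψ t)‖ * (μ t) ^ 2 - lam - γ * μ t)
      (Set.Icc s T) :=
    (((hQc.neg.mul (hμ.pow 2)).sub continuousOn_const).sub (continuousOn_const.mul hμ))
  have key : ∀ t ∈ Set.uIcc s T,
      HasDerivAt (fun u => V u (x u) (ψ u))
        (-(-‖Q (x t) (ψ t)‖ * (μ t) ^ 2 - lam - γ * μ t)) t := by
    rw [Set.uIcc_of_le hsT]
    intro t ht
    have h := aux_hasDerivAt_comp V Vt Vx Vψ hVt hVx hVψ hVtc hVxc hVψc x ψ t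
      (μ t • F (x t) (ψ t)) (μ t) (hx t ht) (hψ t ht)
    have hq := heq t (x t) (ψ t)
    rw [← hfeedback t ht] at hq
    have hval : Vt t (x t) (ψ t) + ⟪Vx t (x t) (ψ t), μ t • F (x t) (ψ t)⟫
        + Vψ t (x t) (ψ t) * μ t
        = -(-‖Q (x t) (ψ t)‖ * (μ t) ^ 2 - lam - γ * μ t) := by
      rw [real_inner_smul_right]
      linear_combination hq
    rwa [hval] at h
  have hint : IntervalIntegrable
      (fun t => -(-‖Q (x t) (ψ t)‖ * (μ t) ^ 2 - lam - γ * μ t)) MeasureTheory.volume s T := by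
    apply ContinuousOn.intervalIntegrable
    rw [Set.uIcc_of_le hsT]
    exact hfc.neg
  have hFTC := intervalIntegral.integral_eq_sub_of_hasDerivAt key hint
  rw [intervalIntegral.integral_neg] at hFTC
  have hgT : V T (x T) (ψ T) = (γ + lam) * T := hterm _ _
  have hgs : V s (x s) (ψ s) = V s y φ := by rw [hxy, hψφ]
  rw [hgT, hgs] at hFTC
  linarith [hFTC]
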